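/- Let D = (D, H, V) be a domino system. Consider the SHIN⁺ role hierarchy R⁺ generated by role names X₁, X₂, Y₁, Y₂ and transitive role names S₁₁, S₁₂, S₂₁, S₂₂ with axioms Xᵢ ⊑ S_{ij} and Yⱼ ⊑ S_{ij} for i, j ∈ {1,2}, and the terminology T consisting of: the grid axioms A ⊑ ¬B ⊓ ¬C ⊓ ¬E ⊓ ∃X₁.B ⊓ ∃Y₁.C ⊓ (≤ 3 S₁₁), B ⊑ ¬A ⊓ ¬C ⊓ ¬E ⊓ ∃X₂.A ⊓ ∃Y₁.E ⊓ (≤ 3 S₂₁), C ⊑ ¬A ⊓ ¬B ⊓ ¬E ⊓ ∃X₁.E ⊓ ∃Y₂.A ⊓ (≤ 3 S₁₂), E ⊑ ¬A ⊓ ¬B ⊓ ¬C ⊓ ∃X₂.C ⊓ ∃Y₂.B ⊓ (≤ 3 S₂₂) for concept names A, B, C, E; the tiling axioms A ⊔ B ⊔ C ⊔ E ⊑ ⊔_{d ∈ D} C_d with fresh concept names C_d, C_d ⊑ ¬C_{d'} for d ≠ d', and the local compatibility axioms C_d ⊑ ∀X₁.(⊔_{(d,d') ∈ H} C_{d'})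 ⊓ ∀X₂.(⊔_{(d,d') ∈ H} C_{d'}) ⊓ ∀Y₁.(⊔_{(d,d') ∈ V} C_{d'}) ⊓ ∀Y₂.(⊔_{(d,d') ∈ V} C_{d'}) for each d ∈ D. Then the concept A is satisfiable with respect to T and R⁺ if and only if D admits a tiling of ℕ × ℕ. -/

import Mathlib

/-- SHIQ-roles: role names (indexed by ℕ) and their inverses. -/
inductive Role where
  | atom : ℕ → Role
  | inv  : ℕ → Role
deriving DecidableEq

/-- The function `Inv` on roles: `Inv(R) = R⁻`, `Inv(R⁻) = R`. -/
def Role.Inv : Role → Role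
  | .atom r => .inv r
  | .inv r  => .atom r

/-- The underlying role name of a (possibly inverse) role. -/
def Role.name : Role → ℕ
  | .atom r => r
  | .inv r  => r

/-- Concepts of the SHIQ family (with ⊤ and ⊥ for convenience). -/
inductive DLConcept where
  | top : DLConcept
  | bot : DLConcept
  | atom : ℕ → DLConcept
  | neg : DLConcept → DLConcept
  | and : DLConcept → DLConcept → DLConcept
  | or : DLConcept → DLConcept → DLConcept
  | all : Role → DLConcept → DLConcept
  | ex : Role → DLConcept → DLConcept
  | atleast : ℕ → Role → DLConcept → DLConcept
  | atmost : ℕ → Role → DLConcept → DLConcept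
deriving DecidableEq

/-- An interpretation: a (nonempty) domain, a valuation of concept names and
    of role names. -/
structure Interp where
  Dom : Type
  dom_nonempty : Nonempty Dom
  cI : ℕ → Set Dom
  rI : ℕ → Dom → Dom → Prop

/-- Semantics of (possibly inverse) roles. -/
def Interp.rSem (I : Interp) : Role → I.Dom → I.Dom → Prop
  | .atom r => I.rI r
  | .inv r  => fun x y => I.rI r y x

/-- Semantics of concepts; number restrictions are interpreted by counting
    role successors (via cardinalities, so that infinite sets are handled
    correctly). -/
def Interp.cSem (I : Interp) : DLConcept → Set I.Dom
  | .top => Set.univ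
  | .bot => ∅
  | .atom a => I.cI a
  | .neg C => (I.cSem C)ᶜ
  | .and C D => I.cSem C ∩ I.cSem D
  | .or C D => I.cSem C ∪ I.cSem D
  | .all R C => {x | ∀ y, I.rSem R x y → y ∈ I.cSem C}
  | .ex R C => {x | ∃ y, I.rSem R x y ∧ y ∈ I.cSem C}
  | .atleast n R C => {x | (n : Cardinal) ≤ Cardinal.mk {y // I.rSem R x y ∧ y ∈ I.cSem C}}
  | .atmost n R C => {x | Cardinal.mk {y // I.rSem R x y ∧ y ∈ I.cSem C} ≤ (n : Cardinal)}

/-- `I.Good Rp`: the interpretation interprets every transitive role name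
    (member of `Rp`) by a transitive relation. -/
def Interp.Good (I : Interp) (Rp : Set ℕ) : Prop :=
  ∀ r ∈ Rp, Transitive (I.rI r)

/-- The role hierarchy ⊑* generated by a finite set of role inclusion axioms:
    inverses are added and the transitive-reflexive closure is taken. -/
def SubRole (RIA : List (Role × Role)) : Role → Role → Prop :=
  Relation.ReflTransGen (fun R S => (R, S) ∈ RIA ∨ (R.Inv, S.Inv) ∈ RIA)

/-- `I ⊨ R⁺`: the interpretation satisfies the role hierarchy. -/
def Interp.ModelsRH (I : Interp) (RIA : List (Role × Role)) : Prop :=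
  ∀ R S, SubRole RIA R S → ∀ x y, I.rSem R x y → I.rSem S x y

/-- `Trans(R)`: a (possibly inverse) role is transitive iff its name is in `Rp`. -/
def RTrans (Rp : Set ℕ) : Role → Prop
  | .atom r => r ∈ Rp
  | .inv r  => r ∈ Rp

/-- A role is simple iff it is neither transitive nor has a transitive sub-role. -/
def SimpleRole (Rp : Set ℕ) (RIA : List (Role × Role)) (R : Role) : Prop :=
  ∀ S, SubRole RIA S R → ¬ RTrans Rp S

/-- SHIQ-concepts: number restrictions occur only on simple roles. -/
def DLConcept.IsSHIQ (Rp : Set ℕ) (RIA : List (Role × Role)) : DLConcept → Prop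
  | .top | .bot | .atom _ => True
  | .neg C => C.IsSHIQ Rp RIA
  | .and C D | .or C D => C.IsSHIQ Rp RIA ∧ D.IsSHIQ Rp RIA
  | .all _ C | .ex _ C => C.IsSHIQ Rp RIA
  | .atleast _ R C | .atmost _ R C => SimpleRole Rp RIA R ∧ C.IsSHIQ Rp RIA

/-- Satisfiability of a concept w.r.t. a role hierarchy. -/
def Satisfiable (Rp : Set ℕ) (RIA : List (Role × Role)) (C : DLConcept) : Prop :=
  ∃ I : Interp, I.Good Rp ∧ I.ModelsRH RIA ∧ (I.cSem C).Nonempty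

/-- Subsumption of concepts w.r.t. a role hierarchy. -/
def Subsumes (Rp : Set ℕ) (RIA : List (Role × Role)) (C D : DLConcept) : Prop :=
  ∀ I : Interp, I.Good Rp → I.ModelsRH RIA → I.cSem C ⊆ I.cSem D
/-- A terminology: a finite list of general concept inclusion axioms `C ⊑ D`. -/
abbrev Terminology := List (DLConcept × DLConcept)

/-- `I` is a model of the terminology `T`. -/
def Interp.ModelsT (I : Interp) (T : Terminology) : Prop :=
  ∀ p ∈ T, I.cSem p.1 ⊆ I.cSem p.2

/-- Satisfiability w.r.t. a terminology and a role hierarchy. -/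
def SatisfiableT (Rp : Set ℕ) (RIA : List (Role × Role)) (T : Terminology)
    (C : DLConcept) : Prop :=
  ∃ I : Interp, I.Good Rp ∧ I.ModelsRH RIA ∧ I.ModelsT T ∧ (I.cSem C).Nonempty

/-- Subsumption w.r.t. a terminology and a role hierarchy. -/
def SubsumesT (Rp : Set ℕ) (RIA : List (Role × Role)) (T : Terminology)
    (C D : DLConcept) : Prop :=
  ∀ I : Interp, I.Good Rp → I.ModelsRH RIA → I.ModelsT T → I.cSem C ⊆ I.cSem D

/-- `C_T`: the conjunction of all `¬Cᵢ ⊔ Dᵢ` for `Cᵢ ⊑ Dᵢ ∈ T`. -/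
def CT (T : Terminology) : DLConcept :=
  T.foldr (fun p acc => DLConcept.and (DLConcept.or (DLConcept.neg p.1) p.2) acc) DLConcept.top

/-- The role names occurring in a concept. -/
def DLConcept.roleNames : DLConcept → Finset ℕ
  | .top | .bot | .atom _ => ∅
  | .neg C => C.roleNames
  | .and C D | .or C D => C.roleNames ∪ D.roleNames
  | .all R C | .ex R C => insert R.name C.roleNames
  | .atleast _ R C | .atmost _ R C => insert R.name C.roleNames

/-- The role names occurring in a terminology. -/
def termRoleNames (T : Terminology) : Finset ℕ :=
  T.foldr (fun p acc => p.1.roleNames ∪ p.2.roleNames ∪ acc) ∅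

/-- The role names occurring in a set of role inclusion axioms. -/
def riaRoleNames (RIA : List (Role × Role)) : Finset ℕ :=
  RIA.foldr (fun p acc => insert p.1.name (insert p.2.name acc)) ∅

/-- `R_U`: the given role inclusion axioms extended with `R ⊑ U` and
    `Inv(R) ⊑ U` for every role (name) `r` in `names`. -/
def addU (RIA : List (Role × Role)) (names : Finset ℕ) (u : ℕ) : List (Role × Role) :=
  RIA ++ (names.sort (· ≤ ·)).map (fun r => (Role.atom r, Role.atom u))
      ++ (names.sort (· ≤ ·)).map (fun r => (Role.inv r, Role.atom u))

/-- Disjunction of a list of concepts (`⊥` for the empty list). -/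
def bigOr (l : List DLConcept) : DLConcept := l.foldr DLConcept.or DLConcept.bot

/-- Conjunction of a list of concepts (`⊤` for the empty list). -/
def bigAnd (l : List DLConcept) : DLConcept := l.foldr DLConcept.and DLConcept.top


lemma mem_bigOr {I : Interp} (l : List DLConcept) (x : I.Dom) :
    x ∈ I.cSem (bigOr l) ↔ ∃ C ∈ l, x ∈ I.cSem C := by
  induction l with
  | nil => simp [bigOr, Interp.cSem]
  | cons C l ih =>
    simp only [bigOr, List.foldr] at ih ⊢
    constructor
    · rintro (h | h)
      · exact ⟨C, by simp, h⟩
      · obtain ⟨D, hD, hx⟩ := ih.1 h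
        exact ⟨D, by simp [hD], hx⟩
    · rintro ⟨D, hD, hx⟩
      rcases List.mem_cons.1 hD with rfl | hD
      · exact Or.inl hx
      · exact Or.inr (ih.2 ⟨D, hD, hx⟩)

lemma mem_bigAnd {I : Interp} (l : List DLConcept) (x : I.Dom) :
    x ∈ I.cSem (bigAnd l) ↔ ∀ C ∈ l, x ∈ I.cSem C := by
  induction l with
  | nil => simp [bigAnd, Interp.cSem]
  | cons C l ih =>
    simp only [bigAnd, List.foldr] at ih ⊢
    constructor
    · rintro ⟨h1, h2⟩ D hD
      rcases List.mem_cons.1 hD with rfl | hD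
      · exact h1
      · exact ih.1 h2 D hD
    · intro h
      exact ⟨h C (by simp), ih.2 fun D hD => h D (by simp [hD])⟩

lemma Role.inv_inv (R : Role) : R.Inv.Inv = R := by cases R <;> rfl

lemma Role.inv_eq_atom {R : Role} {r : ℕ} (h : R.Inv = Role.atom r) : R = Role.inv r := by
  cases R <;> simp [Role.Inv] at h ⊢ <;> omega

lemma Role.inv_eq_inv {R : Role} {r : ℕ} (h : R.Inv = Role.inv r) : R = Role.atom r := by
  cases R <;> simp [Role.Inv] at h ⊢ <;> omega

def sgen (px py : ℕ → Prop) (p q : ℕ × ℕ) : Prop :=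
  (q.1 = p.1 ∨ (q.1 = p.1 + 1 ∧ px p.1)) ∧ (q.2 = p.2 ∨ (q.2 = p.2 + 1 ∧ py p.2)) ∧ q ≠ p

lemma sgen_trans {px py : ℕ → Prop} (hpx : ∀ m, px m → ¬ px (m+1))
    (hpy : ∀ m, py m → ¬ py (m+1)) : Transitive (sgen px py) := by
  rintro p q r ⟨h1, h2, hne⟩ ⟨g1, g2, _⟩
  refine ⟨?_, ?_, ?_⟩
  · rcases h1 with h | ⟨h, hp⟩
    · rw [h] at g1; exact g1
    · rcases g1 with g | ⟨g, gp⟩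
      · right; rw [g, h]; exact ⟨rfl, hp⟩
      · exact absurd gp (h ▸ hpx p.1 hp)
  · rcases h2 with h | ⟨h, hp⟩
    · rw [h] at g2; exact g2
    · rcases g2 with g | ⟨g, gp⟩
      · right; rw [g, h]; exact ⟨rfl, hp⟩
      · exact absurd gp (h ▸ hpy p.2 hp)
  · rintro rfl
    apply hne
    have a1 : q.1 = r.1 := by rcases h1 with h | ⟨h, _⟩ <;> rcases g1 with g | ⟨g, _⟩ <;> omega
    have a2 : q.2 = r.2 := by rcases h2 with h | ⟨h, _⟩ <;> rcases g2 with g | ⟨g, _⟩ <;> omega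
    exact Prod.ext a1 a2

lemma sgen_of_x {px py : ℕ → Prop} {p : ℕ × ℕ} (hp : px p.1) : sgen px py p (p.1 + 1, p.2) :=
  ⟨Or.inr ⟨rfl, hp⟩, Or.inl rfl, by simp [Prod.ext_iff]⟩

lemma sgen_of_y {px py : ℕ → Prop} {p : ℕ × ℕ} (hp : py p.2) : sgen px py p (p.1, p.2 + 1) :=
  ⟨Or.inl rfl, Or.inr ⟨rfl, hp⟩, by simp [Prod.ext_iff]⟩

lemma square_lemma {α : Type} {S : α → α → Prop} (hS : Transitive S)
    {RX RY : α → α → Prop} (hX : ∀ x y, RX x y → S x y) (hY : ∀ x y, RY x y → S x y)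
    {w u v u' v' : α} {TB TC TD : Set α}
    (hcard : Cardinal.mk {y // S w y ∧ y ∈ (Set.univ : Set α)} ≤ ((3:ℕ) : Cardinal))
    (hu : u ∈ TB) (hv : v ∈ TC) (hu' : u' ∈ TD) (hv' : v' ∈ TD)
    (hBC : ∀ x, x ∈ TB → x ∉ TC) (hBD : ∀ x, x ∈ TB → x ∉ TD)
    (hCD : ∀ x, x ∈ TC → x ∉ TD)
    (e1 : RX w u) (e2 : RY w v) (e3 : RY u u') (e4 : RX v v') : u' = v' := by
  by_contra hne
  have s1 : S w u := hX _ _ e1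
  have s2 : S w v := hY _ _ e2
  have s3 : S w u' := hS s1 (hY _ _ e3)
  have s4 : S w v' := hS s2 (hX _ _ e4)
  have d12 : u ≠ v := fun h => hBC u hu (h ▸ hv)
  have d13 : u ≠ u' := fun h => hBD u hu (h ▸ hu')
  have d14 : u ≠ v' := fun h => hBD u hu (h ▸ hv')
  have d23 : v ≠ u' := fun h => hCD v hv (h ▸ hu')
  have d24 : v ≠ v' := fun h => hCD v hv (h ▸ hv')
  let f : Fin 4 → {y // S w y ∧ y ∈ (Set.univ : Set α)} :=
    ![⟨u, s1, trivial⟩, ⟨v, s2, trivial⟩, ⟨u', s3, trivial⟩, ⟨v', s4, trivial⟩]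
  have hf : Function.Injective f := by
    intro i j h
    have hval : (f i).1 = (f j).1 := congrArg Subtype.val h
    fin_cases i <;> fin_cases j <;> simp_all [f] <;>
      first
        | rfl
        | exact absurd hval (by tauto)
        | exact absurd hval.symm (by tauto)
  have h4 : ((4:ℕ) : Cardinal) ≤ Cardinal.mk {y // S w y ∧ y ∈ (Set.univ : Set α)} := by
    have := Cardinal.mk_le_of_injective hf
    simpa using this
  have : (4:ℕ) ≤ (3:ℕ) := by exact_mod_cast h4.trans hcard
  omega
def tileInterp (x1 x2 y1 y2 s11 s12 s21 s22 a b c e : ℕ) (cd : ℕ → ℕ)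
    (t : ℕ → ℕ → ℕ) : Interp where
  Dom := ℕ × ℕ
  dom_nonempty := ⟨(0, 0)⟩
  cI k := {p | (k = a ∧ Even p.1 ∧ Even p.2) ∨ (k = b ∧ ¬Even p.1 ∧ Even p.2) ∨
    (k = c ∧ Even p.1 ∧ ¬Even p.2) ∨ (k = e ∧ ¬Even p.1 ∧ ¬Even p.2) ∨
    k = cd (t p.1 p.2)}
  rI k p q := (k = x1 ∧ q = (p.1 + 1, p.2) ∧ Even p.1) ∨
    (k = x2 ∧ q = (p.1 + 1, p.2) ∧ ¬Even p.1) ∨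
    (k = y1 ∧ q = (p.1, p.2 + 1) ∧ Even p.2) ∨
    (k = y2 ∧ q = (p.1, p.2 + 1) ∧ ¬Even p.2) ∨
    (k = s11 ∧ sgen Even Even p q) ∨
    (k = s12 ∧ sgen Even (fun n => ¬Even n) p q) ∨
    (k = s21 ∧ sgen (fun n => ¬Even n) Even p q) ∨
    (k = s22 ∧ sgen (fun n => ¬Even n) (fun n => ¬Even n) p q)

lemma even_alt : ∀ m : ℕ, Even m → ¬ Even (m+1) := by
  intro m h; simp [Nat.even_add_one, h]

lemma odd_alt : ∀ m : ℕ, ¬Even m → ¬ ¬Even (m+1) := by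
  intro m h; simp [Nat.even_add_one, h]

lemma sgen_card (px py : ℕ → Prop) (p : ℕ × ℕ) :
    Cardinal.mk {q // sgen px py p q ∧ q ∈ (Set.univ : Set (ℕ × ℕ))} ≤ ((3:ℕ) : Cardinal) := by
  have hsub : {q | sgen px py p q ∧ q ∈ (Set.univ : Set (ℕ × ℕ))} ⊆
      ↑({(p.1 + 1, p.2), (p.1, p.2 + 1), (p.1 + 1, p.2 + 1)} : Finset (ℕ × ℕ)) := by
    rintro ⟨q1, q2⟩ ⟨⟨h1, h2, hne⟩, -⟩
    obtain ⟨p1, p2⟩ := p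
    simp only [Finset.coe_insert, Set.mem_insert_iff, Finset.coe_singleton,
      Set.mem_singleton_iff, Prod.ext_iff]
    simp only [] at h1 h2
    rcases h1 with h1 | ⟨h1, -⟩ <;> rcases h2 with h2 | ⟨h2, -⟩
    · exact absurd (show ((q1, q2) : ℕ × ℕ) = (p1, p2) by rw [h1, h2]) hne
    · omega
    · omega
    · omega
  calc Cardinal.mk {q // sgen px py p q ∧ q ∈ (Set.univ : Set (ℕ × ℕ))}
      ≤ Cardinal.mk (↑({(p.1 + 1, p.2), (p.1, p.2 + 1), (p.1 + 1, p.2 + 1)} : Finset (ℕ × ℕ)) : Set (ℕ × ℕ)) :=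
        Cardinal.mk_le_mk_of_subset hsub
    _ = (({(p.1 + 1, p.2), (p.1, p.2 + 1), (p.1 + 1, p.2 + 1)} : Finset (ℕ × ℕ)).card : Cardinal) :=
        Cardinal.mk_coe_finset
    _ ≤ ((3:ℕ) : Cardinal) := by
        have h3 : ({(p.1 + 1, p.2), (p.1, p.2 + 1), (p.1 + 1, p.2 + 1)} : Finset (ℕ × ℕ)).card ≤ 3 := by
          apply le_trans (Finset.card_insert_le _ _)
          apply Nat.succ_le_succ
          apply le_trans (Finset.card_insert_le _ _)
          simp
        exact_mod_cast h3
section TileModel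
variable {x1 x2 y1 y2 s11 s12 s21 s22 a b c e : ℕ} {cd : ℕ → ℕ} {t : ℕ → ℕ → ℕ}

local notation "J" => tileInterp x1 x2 y1 y2 s11 s12 s21 s22 a b c e cd t

lemma memA (hab : a ≠ b) (hac : a ≠ c) (hae : a ≠ e) (hfr : ∀ m n, cd (t m n) ≠ a)
    (p : ℕ × ℕ) : p ∈ (J).cI a ↔ Even p.1 ∧ Even p.2 := by
  constructor
  · rintro (⟨-, h⟩ | ⟨h, -⟩ | ⟨h, -⟩ | ⟨h, -⟩ | h)
    · exact h
    · exact absurd h hab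
    · exact absurd h hac
    · exact absurd h hae
    · exact absurd h.symm (hfr _ _)
  · intro h; exact Or.inl ⟨rfl, h⟩

lemma memB (hab : b ≠ a) (hbc : b ≠ c) (hbe : b ≠ e) (hfr : ∀ m n, cd (t m n) ≠ b)
    (p : ℕ × ℕ) : p ∈ (J).cI b ↔ ¬Even p.1 ∧ Even p.2 := by
  constructor
  · rintro (⟨h, -⟩ | ⟨-, h⟩ | ⟨h, -⟩ | ⟨h, -⟩ | h)
    · exact absurd h hab
    · exact h
    · exact absurd h hbc
    · exact absurd h hbe
    · exact absurd h.symm (hfr _ _)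
  · intro h; exact Or.inr (Or.inl ⟨rfl, h⟩)

lemma memC (hca : c ≠ a) (hcb : c ≠ b) (hce : c ≠ e) (hfr : ∀ m n, cd (t m n) ≠ c)
    (p : ℕ × ℕ) : p ∈ (J).cI c ↔ Even p.1 ∧ ¬Even p.2 := by
  constructor
  · rintro (⟨h, -⟩ | ⟨h, -⟩ | ⟨-, h⟩ | ⟨h, -⟩ | h)
    · exact absurd h hca
    · exact absurd h hcb
    · exact h
    · exact absurd h hce
    · exact absurd h.symm (hfr _ _)
  · intro h; exact Or.inr (Or.inr (Or.inl ⟨rfl, h⟩))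

lemma memE (hea : e ≠ a) (heb : e ≠ b) (hec : e ≠ c) (hfr : ∀ m n, cd (t m n) ≠ e)
    (p : ℕ × ℕ) : p ∈ (J).cI e ↔ ¬Even p.1 ∧ ¬Even p.2 := by
  constructor
  · rintro (⟨h, -⟩ | ⟨h, -⟩ | ⟨h, -⟩ | ⟨-, h⟩ | h)
    · exact absurd h hea
    · exact absurd h heb
    · exact absurd h hec
    · exact h
    · exact absurd h.symm (hfr _ _)
  · intro h; exact Or.inr (Or.inr (Or.inr (Or.inl ⟨rfl, h⟩)))

lemma memCd (d : ℕ) (hfa : cd d ≠ a) (hfb : cd d ≠ b) (hfc : cd d ≠ c) (hfe : cd d ≠ e)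
    (hinj : ∀ m n, cd (t m n) = cd d → t m n = d)
    (p : ℕ × ℕ) : p ∈ (J).cI (cd d) ↔ t p.1 p.2 = d := by
  constructor
  · rintro (⟨h, -⟩ | ⟨h, -⟩ | ⟨h, -⟩ | ⟨h, -⟩ | h)
    · exact absurd h hfa
    · exact absurd h hfb
    · exact absurd h hfc
    · exact absurd h hfe
    · exact hinj _ _ h.symm
  · intro h
    exact Or.inr (Or.inr (Or.inr (Or.inr (by rw [h]))))

lemma card_le_of_iff {α : Type} {P Q : α → Prop} {C : Cardinal}
    (h : ∀ x, P x ↔ Q x) (hc : Cardinal.mk {x // Q x} ≤ C) :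
    Cardinal.mk {x // P x} ≤ C := by
  rw [Cardinal.mk_congr (Equiv.subtypeEquivRight h)]; exact hc

lemma rI_sgen (s : ℕ) (px py : ℕ → Prop)
    (hsx1 : s ≠ x1) (hsx2 : s ≠ x2) (hsy1 : s ≠ y1) (hsy2 : s ≠ y2)
    (hsel : (s = s11 ∧ px = Even ∧ py = Even) ∨
      (s = s12 ∧ px = Even ∧ py = (fun n => ¬Even n)) ∨
      (s = s21 ∧ px = (fun n => ¬Even n) ∧ py = Even) ∨
      (s = s22 ∧ px = (fun n => ¬Even n) ∧ py = (fun n => ¬Even n)))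
    (hs1 : s = s11 ∨ s ≠ s11) : True := trivial

end TileModel
lemma sgen_of_xedge {px py : ℕ → Prop} {p q : ℕ × ℕ} (h : q = (p.1 + 1, p.2) ∧ px p.1) :
    sgen px py p q := by rw [h.1]; exact sgen_of_x h.2

lemma sgen_of_yedge {px py : ℕ → Prop} {p q : ℕ × ℕ} (h : q = (p.1, p.2 + 1) ∧ py p.2) :
    sgen px py p q := by rw [h.1]; exact sgen_of_y h.2

section TileModel2
variable {x1 x2 y1 y2 s11 s12 s21 s22 a b c e : ℕ} {cd : ℕ → ℕ} {t : ℕ → ℕ → ℕ}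

local notation "J" => tileInterp x1 x2 y1 y2 s11 s12 s21 s22 a b c e cd t

lemma rI_x1_iff (h2 : x1 ≠ x2) (h3 : x1 ≠ y1) (h4 : x1 ≠ y2) (h5 : x1 ≠ s11)
    (h6 : x1 ≠ s12) (h7 : x1 ≠ s21) (h8 : x1 ≠ s22) (p q : ℕ × ℕ) :
    (J).rI x1 p q ↔ q = (p.1 + 1, p.2) ∧ Even p.1 := by
  constructor
  · rintro (⟨-, h⟩ | ⟨h, -⟩ | ⟨h, -⟩ | ⟨h, -⟩ | ⟨h, -⟩ | ⟨h, -⟩ | ⟨h, -⟩ | ⟨h, -⟩)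
    · exact h
    · exact absurd h h2
    · exact absurd h h3
    · exact absurd h h4
    · exact absurd h h5
    · exact absurd h h6
    · exact absurd h h7
    · exact absurd h h8
  · intro h; exact Or.inl ⟨rfl, h⟩

lemma rI_x2_iff (h2 : x2 ≠ x1) (h3 : x2 ≠ y1) (h4 : x2 ≠ y2) (h5 : x2 ≠ s11)
    (h6 : x2 ≠ s12) (h7 : x2 ≠ s21) (h8 : x2 ≠ s22) (p q : ℕ × ℕ) :
    (J).rI x2 p q ↔ q = (p.1 + 1, p.2) ∧ ¬Even p.1 := by
  constructor
  · rintro (⟨h, -⟩ | ⟨-, h⟩ | ⟨h, -⟩ | ⟨h, -⟩ | ⟨h, -⟩ | ⟨h, -⟩ | ⟨h, -⟩ | ⟨h, -⟩)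
    · exact absurd h h2
    · exact h
    · exact absurd h h3
    · exact absurd h h4
    · exact absurd h h5
    · exact absurd h h6
    · exact absurd h h7
    · exact absurd h h8
  · intro h; exact Or.inr (Or.inl ⟨rfl, h⟩)

lemma rI_y1_iff (h2 : y1 ≠ x1) (h3 : y1 ≠ x2) (h4 : y1 ≠ y2) (h5 : y1 ≠ s11)
    (h6 : y1 ≠ s12) (h7 : y1 ≠ s21) (h8 : y1 ≠ s22) (p q : ℕ × ℕ) :
    (J).rI y1 p q ↔ q = (p.1, p.2 + 1) ∧ Even p.2 := by
  constructor
  · rintro (⟨h, -⟩ | ⟨h, -⟩ | ⟨-, h⟩ | ⟨h, -⟩ | ⟨h, -⟩ | ⟨h, -⟩ | ⟨h, -⟩ | ⟨h, -⟩)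
    · exact absurd h h2
    · exact absurd h h3
    · exact h
    · exact absurd h h4
    · exact absurd h h5
    · exact absurd h h6
    · exact absurd h h7
    · exact absurd h h8
  · intro h; exact Or.inr (Or.inr (Or.inl ⟨rfl, h⟩))

lemma rI_y2_iff (h2 : y2 ≠ x1) (h3 : y2 ≠ x2) (h4 : y2 ≠ y1) (h5 : y2 ≠ s11)
    (h6 : y2 ≠ s12) (h7 : y2 ≠ s21) (h8 : y2 ≠ s22) (p q : ℕ × ℕ) :
    (J).rI y2 p q ↔ q = (p.1, p.2 + 1) ∧ ¬Even p.2 := by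
  constructor
  · rintro (⟨h, -⟩ | ⟨h, -⟩ | ⟨h, -⟩ | ⟨-, h⟩ | ⟨h, -⟩ | ⟨h, -⟩ | ⟨h, -⟩ | ⟨h, -⟩)
    · exact absurd h h2
    · exact absurd h h3
    · exact absurd h h4
    · exact h
    · exact absurd h h5
    · exact absurd h h6
    · exact absurd h h7
    · exact absurd h h8
  · intro h; exact Or.inr (Or.inr (Or.inr (Or.inl ⟨rfl, h⟩)))

lemma rI_s11_iff (h2 : s11 ≠ x1) (h3 : s11 ≠ x2) (h4 : s11 ≠ y1) (h5 : s11 ≠ y2)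
    (h6 : s11 ≠ s12) (h7 : s11 ≠ s21) (h8 : s11 ≠ s22) (p q : ℕ × ℕ) :
    (J).rI s11 p q ↔ sgen Even Even p q := by
  constructor
  · rintro (⟨h, -⟩ | ⟨h, -⟩ | ⟨h, -⟩ | ⟨h, -⟩ | ⟨-, h⟩ | ⟨h, -⟩ | ⟨h, -⟩ | ⟨h, -⟩)
    · exact absurd h h2
    · exact absurd h h3
    · exact absurd h h4
    · exact absurd h h5
    · exact h
    · exact absurd h h6
    · exact absurd h h7
    · exact absurd h h8
  · intro h; exact Or.inr (Or.inr (Or.inr (Or.inr (Or.inl ⟨rfl, h⟩))))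

lemma rI_s12_iff (h2 : s12 ≠ x1) (h3 : s12 ≠ x2) (h4 : s12 ≠ y1) (h5 : s12 ≠ y2)
    (h6 : s12 ≠ s11) (h7 : s12 ≠ s21) (h8 : s12 ≠ s22) (p q : ℕ × ℕ) :
    (J).rI s12 p q ↔ sgen Even (fun n => ¬Even n) p q := by
  constructor
  · rintro (⟨h, -⟩ | ⟨h, -⟩ | ⟨h, -⟩ | ⟨h, -⟩ | ⟨h, -⟩ | ⟨-, h⟩ | ⟨h, -⟩ | ⟨h, -⟩)
    · exact absurd h h2
    · exact absurd h h3
    · exact absurd h h4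
    · exact absurd h h5
    · exact absurd h h6
    · exact h
    · exact absurd h h7
    · exact absurd h h8
  · intro h; exact Or.inr (Or.inr (Or.inr (Or.inr (Or.inr (Or.inl ⟨rfl, h⟩)))))

lemma rI_s21_iff (h2 : s21 ≠ x1) (h3 : s21 ≠ x2) (h4 : s21 ≠ y1) (h5 : s21 ≠ y2)
    (h6 : s21 ≠ s11) (h7 : s21 ≠ s12) (h8 : s21 ≠ s22) (p q : ℕ × ℕ) :
    (J).rI s21 p q ↔ sgen (fun n => ¬Even n) Even p q := by
  constructor
  · rintro (⟨h, -⟩ | ⟨h, -⟩ | ⟨h, -⟩ | ⟨h, -⟩ | ⟨h, -⟩ | ⟨h, -⟩ | ⟨-, h⟩ | ⟨h, -⟩)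
    · exact absurd h h2
    · exact absurd h h3
    · exact absurd h h4
    · exact absurd h h5
    · exact absurd h h6
    · exact absurd h h7
    · exact h
    · exact absurd h h8
  · intro h; exact Or.inr (Or.inr (Or.inr (Or.inr (Or.inr (Or.inr (Or.inl ⟨rfl, h⟩))))))

lemma rI_s22_iff (h2 : s22 ≠ x1) (h3 : s22 ≠ x2) (h4 : s22 ≠ y1) (h5 : s22 ≠ y2)
    (h6 : s22 ≠ s11) (h7 : s22 ≠ s12) (h8 : s22 ≠ s21) (p q : ℕ × ℕ) :
    (J).rI s22 p q ↔ sgen (fun n => ¬Even n) (fun n => ¬Even n) p q := by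
  constructor
  · rintro (⟨h, -⟩ | ⟨h, -⟩ | ⟨h, -⟩ | ⟨h, -⟩ | ⟨h, -⟩ | ⟨h, -⟩ | ⟨h, -⟩ | ⟨-, h⟩)
    · exact absurd h h2
    · exact absurd h h3
    · exact absurd h h4
    · exact absurd h h5
    · exact absurd h h6
    · exact absurd h h7
    · exact absurd h h8
    · exact h
  · intro h; exact Or.inr (Or.inr (Or.inr (Or.inr (Or.inr (Or.inr (Or.inr ⟨rfl, h⟩))))))

lemma tileGood (Rp : Set ℕ)
    (hroles : [x1, x2, y1, y2, s11, s12, s21, s22].Nodup)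
    (hx1 : x1 ∉ Rp) (hx2 : x2 ∉ Rp) (hy1 : y1 ∉ Rp) (hy2 : y2 ∉ Rp) :
    (J).Good Rp := by
  simp only [List.nodup_cons, List.mem_cons, List.not_mem_nil, or_false,
    List.mem_singleton, List.nodup_nil, and_true, not_or] at hroles
  obtain ⟨⟨rx12, rxy1, rxy2, rxs11, rxs12, rxs21, rxs22⟩,
    ⟨rx2y1, rx2y2, rx2s11, rx2s12, rx2s21, rx2s22⟩,
    ⟨ry12, rys11, rys12, rys21, rys22⟩,
    ⟨ry2s11, ry2s12, ry2s21, ry2s22⟩,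
    ⟨rs1112, rs1121, rs1122⟩,
    ⟨rs1221, rs1222⟩,
    rs2122⟩ := hroles
  intro r hr p q u h1 h2
  have hrx1 : r ≠ x1 := fun h => hx1 (h ▸ hr)
  have hrx2 : r ≠ x2 := fun h => hx2 (h ▸ hr)
  have hry1 : r ≠ y1 := fun h => hy1 (h ▸ hr)
  have hry2 : r ≠ y2 := fun h => hy2 (h ▸ hr)
  rcases h1 with ⟨h, -⟩ | ⟨h, -⟩ | ⟨h, -⟩ | ⟨h, -⟩ | ⟨rfl, hs⟩ | ⟨rfl, hs⟩ | ⟨rfl, hs⟩ | ⟨rfl, hs⟩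
  · exact absurd h hrx1
  · exact absurd h hrx2
  · exact absurd h hry1
  · exact absurd h hry2
  · rcases h2 with ⟨h, -⟩ | ⟨h, -⟩ | ⟨h, -⟩ | ⟨h, -⟩ | ⟨-, hs'⟩ | ⟨h, -⟩ | ⟨h, -⟩ | ⟨h, -⟩ <;>
      first
        | omega
        | exact Or.inr (Or.inr (Or.inr (Or.inr (Or.inl
            ⟨rfl, sgen_trans even_alt even_alt hs hs'⟩))))
  · rcases h2 with ⟨h, -⟩ | ⟨h, -⟩ | ⟨h, -⟩ | ⟨h, -⟩ | ⟨h, -⟩ | ⟨-, hs'⟩ | ⟨h, -⟩ | ⟨h, -⟩ <;>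
      first
        | omega
        | exact Or.inr (Or.inr (Or.inr (Or.inr (Or.inr (Or.inl
            ⟨rfl, sgen_trans even_alt odd_alt hs hs'⟩)))))
  · rcases h2 with ⟨h, -⟩ | ⟨h, -⟩ | ⟨h, -⟩ | ⟨h, -⟩ | ⟨h, -⟩ | ⟨h, -⟩ | ⟨-, hs'⟩ | ⟨h, -⟩ <;>
      first
        | omega
        | exact Or.inr (Or.inr (Or.inr (Or.inr (Or.inr (Or.inr (Or.inl
            ⟨rfl, sgen_trans odd_alt even_alt hs hs'⟩))))))
  · rcases h2 with ⟨h, -⟩ | ⟨h, -⟩ | ⟨h, -⟩ | ⟨h, -⟩ | ⟨h, -⟩ | ⟨h, -⟩ | ⟨h, -⟩ | ⟨-, hs'⟩ <;>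
      first
        | omega
        | exact Or.inr (Or.inr (Or.inr (Or.inr (Or.inr (Or.inr (Or.inr
            ⟨rfl, sgen_trans odd_alt odd_alt hs hs'⟩))))))

end TileModel2
section TileModel3
variable {x1 x2 y1 y2 s11 s12 s21 s22 a b c e : ℕ} {cd : ℕ → ℕ} {t : ℕ → ℕ → ℕ}

local notation "J" => tileInterp x1 x2 y1 y2 s11 s12 s21 s22 a b c e cd t

lemma tileRH (hroles : [x1, x2, y1, y2, s11, s12, s21, s22].Nodup) :
    (J).ModelsRH
      [(Role.atom x1, Role.atom s11), (Role.atom y1, Role.atom s11),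
       (Role.atom x1, Role.atom s12), (Role.atom y2, Role.atom s12),
       (Role.atom x2, Role.atom s21), (Role.atom y1, Role.atom s21),
       (Role.atom x2, Role.atom s22), (Role.atom y2, Role.atom s22)] := by
  simp only [List.nodup_cons, List.mem_cons, List.not_mem_nil, or_false,
    List.mem_singleton, List.nodup_nil, and_true, not_or] at hroles
  obtain ⟨⟨rx12, rxy1, rxy2, rxs11, rxs12, rxs21, rxs22⟩,
    ⟨rx2y1, rx2y2, rx2s11, rx2s12, rx2s21, rx2s22⟩,
    ⟨ry12, rys11, rys12, rys21, rys22⟩,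
    ⟨ry2s11, ry2s12, ry2s21, ry2s22⟩,
    ⟨rs1112, rs1121, rs1122⟩,
    ⟨rs1221, rs1222⟩,
    ⟨rs2122, -⟩⟩ := hroles
  have hx1iff := rI_x1_iff (t := t) (cd := cd) (a := a) (b := b) (c := c) (e := e) rx12 rxy1 rxy2 rxs11 rxs12 rxs21 rxs22
  have hx2iff := rI_x2_iff (t := t) (cd := cd) (a := a) (b := b) (c := c) (e := e) (Ne.symm rx12) rx2y1 rx2y2 rx2s11 rx2s12 rx2s21 rx2s22
  have hy1iff := rI_y1_iff (t := t) (cd := cd) (a := a) (b := b) (c := c) (e := e) (Ne.symm rxy1) (Ne.symm rx2y1) ry12 rys11 rys12 rys21 rys22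
  have hy2iff := rI_y2_iff (t := t) (cd := cd) (a := a) (b := b) (c := c) (e := e) (Ne.symm rxy2) (Ne.symm rx2y2) (Ne.symm ry12) ry2s11 ry2s12 ry2s21 ry2s22
  have hs11iff := rI_s11_iff (t := t) (cd := cd) (a := a) (b := b) (c := c) (e := e) (Ne.symm rxs11) (Ne.symm rx2s11) (Ne.symm rys11) (Ne.symm ry2s11) rs1112 rs1121 rs1122
  have hs12iff := rI_s12_iff (t := t) (cd := cd) (a := a) (b := b) (c := c) (e := e) (Ne.symm rxs12) (Ne.symm rx2s12) (Ne.symm rys12) (Ne.symm ry2s12) (Ne.symm rs1112) rs1221 rs1222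
  have hs21iff := rI_s21_iff (t := t) (cd := cd) (a := a) (b := b) (c := c) (e := e) (Ne.symm rxs21) (Ne.symm rx2s21) (Ne.symm rys21) (Ne.symm ry2s21) (Ne.symm rs1121) (Ne.symm rs1221) rs2122
  have hs22iff := rI_s22_iff (t := t) (cd := cd) (a := a) (b := b) (c := c) (e := e) (Ne.symm rxs22) (Ne.symm rx2s22) (Ne.symm rys22) (Ne.symm ry2s22) (Ne.symm rs1122) (Ne.symm rs1222) (Ne.symm rs2122)
  have A11 : ∀ p q : ℕ × ℕ, (J).rI x1 p q → (J).rI s11 p q := fun p q h =>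
    (hs11iff p q).2 (sgen_of_xedge ((hx1iff p q).1 h))
  have A12 : ∀ p q : ℕ × ℕ, (J).rI x1 p q → (J).rI s12 p q := fun p q h =>
    (hs12iff p q).2 (sgen_of_xedge ((hx1iff p q).1 h))
  have B21 : ∀ p q : ℕ × ℕ, (J).rI x2 p q → (J).rI s21 p q := fun p q h =>
    (hs21iff p q).2 (sgen_of_xedge ((hx2iff p q).1 h))
  have B22 : ∀ p q : ℕ × ℕ, (J).rI x2 p q → (J).rI s22 p q := fun p q h =>
    (hs22iff p q).2 (sgen_of_xedge ((hx2iff p q).1 h))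
  have C11 : ∀ p q : ℕ × ℕ, (J).rI y1 p q → (J).rI s11 p q := fun p q h =>
    (hs11iff p q).2 (sgen_of_yedge ((hy1iff p q).1 h))
  have C21 : ∀ p q : ℕ × ℕ, (J).rI y1 p q → (J).rI s21 p q := fun p q h =>
    (hs21iff p q).2 (sgen_of_yedge ((hy1iff p q).1 h))
  have D12 : ∀ p q : ℕ × ℕ, (J).rI y2 p q → (J).rI s12 p q := fun p q h =>
    (hs12iff p q).2 (sgen_of_yedge ((hy2iff p q).1 h))
  have D22 : ∀ p q : ℕ × ℕ, (J).rI y2 p q → (J).rI s22 p q := fun p q h =>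
    (hs22iff p q).2 (sgen_of_yedge ((hy2iff p q).1 h))
  have base : ∀ R S : Role,
      ((R, S) ∈ [(Role.atom x1, Role.atom s11), (Role.atom y1, Role.atom s11),
       (Role.atom x1, Role.atom s12), (Role.atom y2, Role.atom s12),
       (Role.atom x2, Role.atom s21), (Role.atom y1, Role.atom s21),
       (Role.atom x2, Role.atom s22), (Role.atom y2, Role.atom s22)] ∨
       (R.Inv, S.Inv) ∈ [(Role.atom x1, Role.atom s11), (Role.atom y1, Role.atom s11),
       (Role.atom x1, Role.atom s12), (Role.atom y2, Role.atom s12),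
       (Role.atom x2, Role.atom s21), (Role.atom y1, Role.atom s21),
       (Role.atom x2, Role.atom s22), (Role.atom y2, Role.atom s22)]) →
      ∀ v w, (J).rSem R v w → (J).rSem S v w := by
    intro R S h
    rcases h with h | h
    · simp only [List.mem_cons, List.not_mem_nil, or_false, Prod.mk.injEq] at h
      rcases h with ⟨rfl, rfl⟩ | ⟨rfl, rfl⟩ | ⟨rfl, rfl⟩ | ⟨rfl, rfl⟩ |
        ⟨rfl, rfl⟩ | ⟨rfl, rfl⟩ | ⟨rfl, rfl⟩ | ⟨rfl, rfl⟩
      exacts [A11, C11, A12, D12, B21, C21, B22, D22]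
    · simp only [List.mem_cons, List.not_mem_nil, or_false, Prod.mk.injEq] at h
      rcases h with ⟨h1, h2⟩ | ⟨h1, h2⟩ | ⟨h1, h2⟩ | ⟨h1, h2⟩ |
        ⟨h1, h2⟩ | ⟨h1, h2⟩ | ⟨h1, h2⟩ | ⟨h1, h2⟩ <;>
        rw [Role.inv_eq_atom h1, Role.inv_eq_atom h2]
      exacts [fun v w h => A11 w v h, fun v w h => C11 w v h, fun v w h => A12 w v h,
        fun v w h => D12 w v h, fun v w h => B21 w v h, fun v w h => C21 w v h,
        fun v w h => B22 w v h, fun v w h => D22 w v h]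
  intro R S hsub
  induction hsub with
  | refl => exact fun v w h => h
  | tail _ hstep ih => exact fun v w h => base _ _ hstep v w (ih v w h)

end TileModel3
section TileModel4
variable {x1 x2 y1 y2 s11 s12 s21 s22 a b c e : ℕ} {cd : ℕ → ℕ} {t : ℕ → ℕ → ℕ}

local notation "J" => tileInterp x1 x2 y1 y2 s11 s12 s21 s22 a b c e cd t

lemma tileModelsT (Dset : Finset ℕ) (H V : Finset (ℕ × ℕ))
    (hroles : [x1, x2, y1, y2, s11, s12, s21, s22].Nodup)
    (hc : [a, b, c, e].Nodup)
    (hcd : Set.InjOn cd ↑Dset)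
    (hfresh : ∀ d ∈ Dset, cd d ∉ [a, b, c, e])
    (hH : ∀ p ∈ H, p.1 ∈ Dset ∧ p.2 ∈ Dset)
    (hV : ∀ p ∈ V, p.1 ∈ Dset ∧ p.2 ∈ Dset)
    (htD : ∀ m n, t m n ∈ Dset)
    (htH : ∀ m n, (t m n, t (m + 1) n) ∈ H)
    (htV : ∀ m n, (t m n, t m (n + 1)) ∈ V) :
    (J).ModelsT
      ([(DLConcept.atom a, bigAnd [(DLConcept.atom b).neg, (DLConcept.atom c).neg,
          (DLConcept.atom e).neg, DLConcept.ex (Role.atom x1) (DLConcept.atom b),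
          DLConcept.ex (Role.atom y1) (DLConcept.atom c),
          DLConcept.atmost 3 (Role.atom s11) DLConcept.top]),
        (DLConcept.atom b, bigAnd [(DLConcept.atom a).neg, (DLConcept.atom c).neg,
          (DLConcept.atom e).neg, DLConcept.ex (Role.atom x2) (DLConcept.atom a),
          DLConcept.ex (Role.atom y1) (DLConcept.atom e),
          DLConcept.atmost 3 (Role.atom s21) DLConcept.top]),
        (DLConcept.atom c, bigAnd [(DLConcept.atom a).neg, (DLConcept.atom b).neg,
          (DLConcept.atom e).neg, DLConcept.ex (Role.atom x1) (DLConcept.atom e),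
          DLConcept.ex (Role.atom y2) (DLConcept.atom a),
          DLConcept.atmost 3 (Role.atom s12) DLConcept.top]),
        (DLConcept.atom e, bigAnd [(DLConcept.atom a).neg, (DLConcept.atom b).neg,
          (DLConcept.atom c).neg, DLConcept.ex (Role.atom x2) (DLConcept.atom c),
          DLConcept.ex (Role.atom y2) (DLConcept.atom b),
          DLConcept.atmost 3 (Role.atom s22) DLConcept.top])] ++
       [(bigOr [DLConcept.atom a, DLConcept.atom b, DLConcept.atom c, DLConcept.atom e],
         bigOr (Dset.toList.map (fun d => DLConcept.atom (cd d))))] ++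
       Dset.toList.flatMap (fun d =>
         (Dset.toList.filter (fun d' => d' ≠ d)).map (fun d' =>
           (DLConcept.atom (cd d), DLConcept.neg (DLConcept.atom (cd d'))))) ++
       Dset.toList.map (fun d =>
         (DLConcept.atom (cd d),
           bigAnd
             [DLConcept.all (Role.atom x1) (bigOr ((H.toList.filter
                 (fun p => p.1 = d)).map (fun p => DLConcept.atom (cd p.2)))),
              DLConcept.all (Role.atom x2) (bigOr ((H.toList.filter
                 (fun p => p.1 = d)).map (fun p => DLConcept.atom (cd p.2)))),
              DLConcept.all (Role.atom y1) (bigOr ((V.toList.filter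
                 (fun p => p.1 = d)).map (fun p => DLConcept.atom (cd p.2)))),
              DLConcept.all (Role.atom y2) (bigOr ((V.toList.filter
                 (fun p => p.1 = d)).map (fun p => DLConcept.atom (cd p.2))))]))) := by
  simp only [List.nodup_cons, List.mem_cons, List.not_mem_nil, or_false,
    List.mem_singleton, List.nodup_nil, and_true, not_or] at hroles hc
  obtain ⟨⟨rx12, rxy1, rxy2, rxs11, rxs12, rxs21, rxs22⟩,
    ⟨rx2y1, rx2y2, rx2s11, rx2s12, rx2s21, rx2s22⟩,
    ⟨ry12, rys11, rys12, rys21, rys22⟩,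
    ⟨ry2s11, ry2s12, ry2s21, ry2s22⟩,
    ⟨rs1112, rs1121, rs1122⟩,
    ⟨rs1221, rs1222⟩,
    ⟨rs2122, -⟩⟩ := hroles
  obtain ⟨⟨cab, cac, cae⟩, ⟨cbc, cbe⟩, ⟨cce, -⟩⟩ := hc
  simp only [List.mem_cons, List.not_mem_nil, or_false, not_or, List.mem_singleton] at hfresh
  have frA : ∀ m n, cd (t m n) ≠ a := fun m n => (hfresh _ (htD m n)).1
  have frB : ∀ m n, cd (t m n) ≠ b := fun m n => (hfresh _ (htD m n)).2.1
  have frC : ∀ m n, cd (t m n) ≠ c := fun m n => (hfresh _ (htD m n)).2.2.1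
  have frE : ∀ m n, cd (t m n) ≠ e := fun m n => (hfresh _ (htD m n)).2.2.2
  have hmemA := memA (x1 := x1) (x2 := x2) (y1 := y1) (y2 := y2) (s11 := s11) (s12 := s12)
    (s21 := s21) (s22 := s22) cab cac cae frA
  have hmemB := memB (x1 := x1) (x2 := x2) (y1 := y1) (y2 := y2) (s11 := s11) (s12 := s12)
    (s21 := s21) (s22 := s22) (Ne.symm cab) cbc cbe frB
  have hmemC := memC (x1 := x1) (x2 := x2) (y1 := y1) (y2 := y2) (s11 := s11) (s12 := s12)
    (s21 := s21) (s22 := s22) (Ne.symm cac) (Ne.symm cbc) cce frC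
  have hmemE := memE (x1 := x1) (x2 := x2) (y1 := y1) (y2 := y2) (s11 := s11) (s12 := s12)
    (s21 := s21) (s22 := s22) (Ne.symm cae) (Ne.symm cbe) (Ne.symm cce) frE
  have hmemCd : ∀ d ∈ Dset, ∀ p : ℕ × ℕ, (p ∈ (J).cI (cd d) ↔ t p.1 p.2 = d) := by
    intro d hd p
    obtain ⟨f1, f2, f3, f4⟩ := hfresh d hd
    exact memCd (x1 := x1) (x2 := x2) (y1 := y1) (y2 := y2) (s11 := s11) (s12 := s12)
      (s21 := s21) (s22 := s22) d f1 f2 f3 f4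
      (fun m n h => hcd (Finset.mem_coe.2 (htD m n)) (Finset.mem_coe.2 hd) h) p
  have hx1iff := rI_x1_iff (t := t) (cd := cd) (a := a) (b := b) (c := c) (e := e)
    rx12 rxy1 rxy2 rxs11 rxs12 rxs21 rxs22
  have hx2iff := rI_x2_iff (t := t) (cd := cd) (a := a) (b := b) (c := c) (e := e)
    (Ne.symm rx12) rx2y1 rx2y2 rx2s11 rx2s12 rx2s21 rx2s22
  have hy1iff := rI_y1_iff (t := t) (cd := cd) (a := a) (b := b) (c := c) (e := e)
    (Ne.symm rxy1) (Ne.symm rx2y1) ry12 rys11 rys12 rys21 rys22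
  have hy2iff := rI_y2_iff (t := t) (cd := cd) (a := a) (b := b) (c := c) (e := e)
    (Ne.symm rxy2) (Ne.symm rx2y2) (Ne.symm ry12) ry2s11 ry2s12 ry2s21 ry2s22
  have hs11iff := rI_s11_iff (t := t) (cd := cd) (a := a) (b := b) (c := c) (e := e)
    (Ne.symm rxs11) (Ne.symm rx2s11) (Ne.symm rys11) (Ne.symm ry2s11) rs1112 rs1121 rs1122
  have hs12iff := rI_s12_iff (t := t) (cd := cd) (a := a) (b := b) (c := c) (e := e)
    (Ne.symm rxs12) (Ne.symm rx2s12) (Ne.symm rys12) (Ne.symm ry2s12) (Ne.symm rs1112) rs1221 rs1222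
  have hs21iff := rI_s21_iff (t := t) (cd := cd) (a := a) (b := b) (c := c) (e := e)
    (Ne.symm rxs21) (Ne.symm rx2s21) (Ne.symm rys21) (Ne.symm ry2s21) (Ne.symm rs1121) (Ne.symm rs1221) rs2122
  have hs22iff := rI_s22_iff (t := t) (cd := cd) (a := a) (b := b) (c := c) (e := e)
    (Ne.symm rxs22) (Ne.symm rx2s22) (Ne.symm rys22) (Ne.symm ry2s22) (Ne.symm rs1122) (Ne.symm rs1222) (Ne.symm rs2122)
  intro pr hpr
  simp only [List.mem_append, List.mem_cons, List.not_mem_nil, or_false, List.mem_flatMap,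
    List.mem_map, List.mem_filter, Finset.mem_toList, decide_eq_true_eq] at hpr
  rcases hpr with (((rfl | rfl | rfl | rfl) | rfl) | ⟨d, hd, d', ⟨hd', hdd'⟩, rfl⟩) | ⟨d, hd, rfl⟩
  · -- axiom A
    intro p hp
    have hpa := (hmemA p).1 hp
    rw [mem_bigAnd]
    intro Cc hCc
    simp only [List.mem_cons, List.not_mem_nil, or_false] at hCc
    obtain rfl | rfl | rfl | rfl | rfl | rfl := hCc
    · exact fun hpb => ((hmemB p).1 hpb).1 hpa.1
    · exact fun hpc => ((hmemC p).1 hpc).2 hpa.2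
    · exact fun hpe => ((hmemE p).1 hpe).1 hpa.1
    · exact ⟨(p.1 + 1, p.2), Or.inl ⟨rfl, rfl, hpa.1⟩,
        (hmemB _).2 ⟨by simp [Nat.even_add_one, hpa.1], hpa.2⟩⟩
    · exact ⟨(p.1, p.2 + 1), Or.inr (Or.inr (Or.inl ⟨rfl, rfl, hpa.2⟩)),
        (hmemC _).2 ⟨hpa.1, by simp [Nat.even_add_one, hpa.2]⟩⟩
    · exact card_le_of_iff (fun q => and_congr_left fun _ => hs11iff p q) (sgen_card Even Even p)
  · -- axiom B
    intro p hp
    have hpb := (hmemB p).1 hp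
    rw [mem_bigAnd]
    intro Cc hCc
    simp only [List.mem_cons, List.not_mem_nil, or_false] at hCc
    obtain rfl | rfl | rfl | rfl | rfl | rfl := hCc
    · exact fun hpa => hpb.1 ((hmemA p).1 hpa).1
    · exact fun hpc => hpb.1 ((hmemC p).1 hpc).1
    · exact fun hpe => ((hmemE p).1 hpe).2 hpb.2
    · exact ⟨(p.1 + 1, p.2), Or.inr (Or.inl ⟨rfl, rfl, hpb.1⟩),
        (hmemA _).2 ⟨by simp [Nat.even_add_one, hpb.1], hpb.2⟩⟩
    · exact ⟨(p.1, p.2 + 1), Or.inr (Or.inr (Or.inl ⟨rfl, rfl, hpb.2⟩)),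
        (hmemE _).2 ⟨hpb.1, by simp [Nat.even_add_one, hpb.2]⟩⟩
    · exact card_le_of_iff (fun q => and_congr_left fun _ => hs21iff p q)
        (sgen_card (fun n => ¬Even n) Even p)
  · -- axiom C
    intro p hp
    have hpc := (hmemC p).1 hp
    rw [mem_bigAnd]
    intro Cc hCc
    simp only [List.mem_cons, List.not_mem_nil, or_false] at hCc
    obtain rfl | rfl | rfl | rfl | rfl | rfl := hCc
    · exact fun hpa => hpc.2 ((hmemA p).1 hpa).2
    · exact fun hpb => hpc.2 ((hmemB p).1 hpb).2
    · exact fun hpe => ((hmemE p).1 hpe).1 hpc.1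
    · exact ⟨(p.1 + 1, p.2), Or.inl ⟨rfl, rfl, hpc.1⟩,
        (hmemE _).2 ⟨by simp [Nat.even_add_one, hpc.1], hpc.2⟩⟩
    · exact ⟨(p.1, p.2 + 1), Or.inr (Or.inr (Or.inr (Or.inl ⟨rfl, rfl, hpc.2⟩))),
        (hmemA _).2 ⟨hpc.1, by simp [Nat.even_add_one, hpc.2]⟩⟩
    · exact card_le_of_iff (fun q => and_congr_left fun _ => hs12iff p q)
        (sgen_card Even (fun n => ¬Even n) p)
  · -- axiom E
    intro p hp
    have hpe := (hmemE p).1 hp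
    rw [mem_bigAnd]
    intro Cc hCc
    simp only [List.mem_cons, List.not_mem_nil, or_false] at hCc
    obtain rfl | rfl | rfl | rfl | rfl | rfl := hCc
    · exact fun hpa => hpe.1 ((hmemA p).1 hpa).1
    · exact fun hpb => hpe.2 ((hmemB p).1 hpb).2
    · exact fun hpc => hpe.1 ((hmemC p).1 hpc).1
    · exact ⟨(p.1 + 1, p.2), Or.inr (Or.inl ⟨rfl, rfl, hpe.1⟩),
        (hmemC _).2 ⟨by simp [Nat.even_add_one, hpe.1], hpe.2⟩⟩
    · exact ⟨(p.1, p.2 + 1), Or.inr (Or.inr (Or.inr (Or.inl ⟨rfl, rfl, hpe.2⟩))),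
        (hmemB _).2 ⟨hpe.1, by simp [Nat.even_add_one, hpe.2]⟩⟩
    · exact card_le_of_iff (fun q => and_congr_left fun _ => hs22iff p q)
        (sgen_card (fun n => ¬Even n) (fun n => ¬Even n) p)
  · -- tiling axiom
    intro p _
    rw [mem_bigOr]
    exact ⟨DLConcept.atom (cd (t p.1 p.2)),
      List.mem_map.2 ⟨t p.1 p.2, Finset.mem_toList.2 (htD p.1 p.2), rfl⟩,
      (hmemCd _ (htD p.1 p.2) p).2 rfl⟩
  · -- disjointness axioms
    intro p hp hp'
    have e1 := (hmemCd d hd p).1 hp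
    have e2 := (hmemCd d' hd' p).1 hp'
    omega
  · -- compatibility axioms
    intro p hp
    have htp := (hmemCd d hd p).1 hp
    rw [mem_bigAnd]
    intro Cc hCc
    simp only [List.mem_cons, List.not_mem_nil, or_false] at hCc
    obtain rfl | rfl | rfl | rfl := hCc
    · intro q hq
      obtain ⟨rfl, -⟩ := (hx1iff p q).1 hq
      have hHm : (d, t (p.1 + 1) p.2) ∈ H := by rw [← htp]; exact htH p.1 p.2
      apply (mem_bigOr _ _).2
      exact ⟨DLConcept.atom (cd (t (p.1 + 1) p.2)),
        List.mem_map.2 ⟨(d, t (p.1 + 1) p.2),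
          List.mem_filter.2 ⟨Finset.mem_toList.2 hHm, by simp⟩, rfl⟩,
        (hmemCd _ (hH _ hHm).2 _).2 rfl⟩
    · intro q hq
      obtain ⟨rfl, -⟩ := (hx2iff p q).1 hq
      have hHm : (d, t (p.1 + 1) p.2) ∈ H := by rw [← htp]; exact htH p.1 p.2
      apply (mem_bigOr _ _).2
      exact ⟨DLConcept.atom (cd (t (p.1 + 1) p.2)),
        List.mem_map.2 ⟨(d, t (p.1 + 1) p.2),
          List.mem_filter.2 ⟨Finset.mem_toList.2 hHm, by simp⟩, rfl⟩,
        (hmemCd _ (hH _ hHm).2 _).2 rfl⟩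
    · intro q hq
      obtain ⟨rfl, -⟩ := (hy1iff p q).1 hq
      have hVm : (d, t p.1 (p.2 + 1)) ∈ V := by rw [← htp]; exact htV p.1 p.2
      apply (mem_bigOr _ _).2
      exact ⟨DLConcept.atom (cd (t p.1 (p.2 + 1))),
        List.mem_map.2 ⟨(d, t p.1 (p.2 + 1)),
          List.mem_filter.2 ⟨Finset.mem_toList.2 hVm, by simp⟩, rfl⟩,
        (hmemCd _ (hV _ hVm).2 _).2 rfl⟩
    · intro q hq
      obtain ⟨rfl, -⟩ := (hy2iff p q).1 hq
      have hVm : (d, t p.1 (p.2 + 1)) ∈ V := by rw [← htp]; exact htV p.1 p.2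
      apply (mem_bigOr _ _).2
      exact ⟨DLConcept.atom (cd (t p.1 (p.2 + 1))),
        List.mem_map.2 ⟨(d, t p.1 (p.2 + 1)),
          List.mem_filter.2 ⟨Finset.mem_toList.2 hVm, by simp⟩, rfl⟩,
        (hmemCd _ (hV _ hVm).2 _).2 rfl⟩

end TileModel4
/-- **Reduction of the domino problem to SHIN⁺.** Let
`(Dset, H, V)` be a domino system.  With the role hierarchy generated by
`Xᵢ ⊑ S_{ij}`, `Yⱼ ⊑ S_{ij}` (the `S_{ij}` transitive, the `Xᵢ`, `Yⱼ` not), and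
the terminology consisting of the grid axioms (with the unqualified number
restrictions `(≤ 3 S_{ij})`), the tiling axioms and the local compatibility
axioms, the concept `A` is satisfiable w.r.t. the terminology and the role
hierarchy iff the domino system admits a tiling of `ℕ × ℕ`. -/
theorem domino_reduction (Rp : Set ℕ)
    (x1 x2 y1 y2 s11 s12 s21 s22 : ℕ)
    (hs11 : s11 ∈ Rp) (hs12 : s12 ∈ Rp) (hs21 : s21 ∈ Rp) (hs22 : s22 ∈ Rp)
    (hx1 : x1 ∉ Rp) (hx2 : x2 ∉ Rp) (hy1 : y1 ∉ Rp) (hy2 : y2 ∉ Rp)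
    (hroles : [x1, x2, y1, y2, s11, s12, s21, s22].Nodup)
    (a b c e : ℕ) (hc : [a, b, c, e].Nodup)
    (cd : ℕ → ℕ)
    (Dset : Finset ℕ) (hD : Dset.Nonempty)
    (hcd : Set.InjOn cd ↑Dset)
    (hfresh : ∀ d ∈ Dset, cd d ∉ [a, b, c, e])
    (H V : Finset (ℕ × ℕ))
    (hH : ∀ p ∈ H, p.1 ∈ Dset ∧ p.2 ∈ Dset)
    (hV : ∀ p ∈ V, p.1 ∈ Dset ∧ p.2 ∈ Dset) :
    let X1 := Role.atom x1; let X2 := Role.atom x2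
    let Y1 := Role.atom y1; let Y2 := Role.atom y2
    let S11 := Role.atom s11; let S12 := Role.atom s12
    let S21 := Role.atom s21; let S22 := Role.atom s22
    let CA := DLConcept.atom a; let CB := DLConcept.atom b
    let CC := DLConcept.atom c; let CE := DLConcept.atom e
    let RIA : List (Role × Role) :=
      [(X1, S11), (Y1, S11), (X1, S12), (Y2, S12),
       (X2, S21), (Y1, S21), (X2, S22), (Y2, S22)]
    let gridAx : Terminology :=
      [(CA, bigAnd [CB.neg, CC.neg, CE.neg, DLConcept.ex X1 CB, DLConcept.ex Y1 CC,
                    DLConcept.atmost 3 S11 DLConcept.top]),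
       (CB, bigAnd [CA.neg, CC.neg, CE.neg, DLConcept.ex X2 CA, DLConcept.ex Y1 CE,
                    DLConcept.atmost 3 S21 DLConcept.top]),
       (CC, bigAnd [CA.neg, CB.neg, CE.neg, DLConcept.ex X1 CE, DLConcept.ex Y2 CA,
                    DLConcept.atmost 3 S12 DLConcept.top]),
       (CE, bigAnd [CA.neg, CB.neg, CC.neg, DLConcept.ex X2 CC, DLConcept.ex Y2 CB,
                    DLConcept.atmost 3 S22 DLConcept.top])]
    let tilingAx : Terminology :=
      [(bigOr [CA, CB, CC, CE],
        bigOr (Dset.toList.map (fun d => DLConcept.atom (cd d))))]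
    let disjAx : Terminology :=
      Dset.toList.flatMap (fun d =>
        (Dset.toList.filter (fun d' => d' ≠ d)).map (fun d' =>
          (DLConcept.atom (cd d), DLConcept.neg (DLConcept.atom (cd d')))))
    let compatAx : Terminology :=
      Dset.toList.map (fun d =>
        (DLConcept.atom (cd d),
          bigAnd
            [DLConcept.all X1 (bigOr ((H.toList.filter
                (fun p => p.1 = d)).map (fun p => DLConcept.atom (cd p.2)))),
             DLConcept.all X2 (bigOr ((H.toList.filter
                (fun p => p.1 = d)).map (fun p => DLConcept.atom (cd p.2)))),
             DLConcept.all Y1 (bigOr ((V.toList.filter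
                (fun p => p.1 = d)).map (fun p => DLConcept.atom (cd p.2)))),
             DLConcept.all Y2 (bigOr ((V.toList.filter
                (fun p => p.1 = d)).map (fun p => DLConcept.atom (cd p.2))))]))
    let T : Terminology := gridAx ++ tilingAx ++ disjAx ++ compatAx
    (SatisfiableT Rp RIA T CA ↔
      ∃ t : ℕ → ℕ → ℕ,
        (∀ m n, t m n ∈ Dset) ∧
        (∀ m n, (t m n, t (m + 1) n) ∈ H) ∧
        (∀ m n, (t m n, t m (n + 1)) ∈ V)) := by
  
  intro X1 X2 Y1 Y2 S11 S12 S21 S22 CA CB CC CE RIA gridAx tilingAx disjAx compatAx T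
  constructor
  · rintro ⟨I, hGood, hRH, hT, x0, hx0⟩
    classical
    -- membership of axioms in T
    have axAmem : (CA, bigAnd [CB.neg, CC.neg, CE.neg, DLConcept.ex X1 CB, DLConcept.ex Y1 CC,
        DLConcept.atmost 3 S11 DLConcept.top]) ∈ T :=
      List.mem_append_left _ (List.mem_append_left _ (List.mem_append_left _ (List.Mem.head _)))
    have axBmem : (CB, bigAnd [CA.neg, CC.neg, CE.neg, DLConcept.ex X2 CA, DLConcept.ex Y1 CE,
        DLConcept.atmost 3 S21 DLConcept.top]) ∈ T :=
      List.mem_append_left _ (List.mem_append_left _ (List.mem_append_left _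
        (List.Mem.tail _ (List.Mem.head _))))
    have axCmem : (CC, bigAnd [CA.neg, CB.neg, CE.neg, DLConcept.ex X1 CE, DLConcept.ex Y2 CA,
        DLConcept.atmost 3 S12 DLConcept.top]) ∈ T :=
      List.mem_append_left _ (List.mem_append_left _ (List.mem_append_left _
        (List.Mem.tail _ (List.Mem.tail _ (List.Mem.head _)))))
    have axEmem : (CE, bigAnd [CA.neg, CB.neg, CC.neg, DLConcept.ex X2 CC, DLConcept.ex Y2 CB,
        DLConcept.atmost 3 S22 DLConcept.top]) ∈ T :=
      List.mem_append_left _ (List.mem_append_left _ (List.mem_append_left _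
        (List.Mem.tail _ (List.Mem.tail _ (List.Mem.tail _ (List.Mem.head _))))))
    have tilmem : (bigOr [CA, CB, CC, CE],
        bigOr (Dset.toList.map (fun d => DLConcept.atom (cd d)))) ∈ T :=
      List.mem_append_left _ (List.mem_append_left _ (List.mem_append_right _ (List.Mem.head _)))
    -- semantic content of the grid axioms
    have hA : ∀ w ∈ I.cSem CA, w ∉ I.cSem CB ∧ w ∉ I.cSem CC ∧ w ∉ I.cSem CE ∧
        (∃ u, I.rSem X1 w u ∧ u ∈ I.cSem CB) ∧ (∃ v, I.rSem Y1 w v ∧ v ∈ I.cSem CC) ∧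
        Cardinal.mk {y // I.rSem S11 w y ∧ y ∈ I.cSem DLConcept.top} ≤ ((3:ℕ) : Cardinal) := by
      intro w hw
      have h := hT _ axAmem hw
      rw [mem_bigAnd] at h
      exact ⟨h CB.neg (by simp), h CC.neg (by simp), h CE.neg (by simp),
        h (DLConcept.ex X1 CB) (by simp), h (DLConcept.ex Y1 CC) (by simp),
        h (DLConcept.atmost 3 S11 DLConcept.top) (by simp)⟩
    have hB : ∀ w ∈ I.cSem CB, w ∉ I.cSem CA ∧ w ∉ I.cSem CC ∧ w ∉ I.cSem CE ∧
        (∃ u, I.rSem X2 w u ∧ u ∈ I.cSem CA) ∧ (∃ v, I.rSem Y1 w v ∧ v ∈ I.cSem CE) ∧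
        Cardinal.mk {y // I.rSem S21 w y ∧ y ∈ I.cSem DLConcept.top} ≤ ((3:ℕ) : Cardinal) := by
      intro w hw
      have h := hT _ axBmem hw
      rw [mem_bigAnd] at h
      exact ⟨h CA.neg (by simp), h CC.neg (by simp), h CE.neg (by simp),
        h (DLConcept.ex X2 CA) (by simp), h (DLConcept.ex Y1 CE) (by simp),
        h (DLConcept.atmost 3 S21 DLConcept.top) (by simp)⟩
    have hC : ∀ w ∈ I.cSem CC, w ∉ I.cSem CA ∧ w ∉ I.cSem CB ∧ w ∉ I.cSem CE ∧
        (∃ u, I.rSem X1 w u ∧ u ∈ I.cSem CE) ∧ (∃ v, I.rSem Y2 w v ∧ v ∈ I.cSem CA) ∧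
        Cardinal.mk {y // I.rSem S12 w y ∧ y ∈ I.cSem DLConcept.top} ≤ ((3:ℕ) : Cardinal) := by
      intro w hw
      have h := hT _ axCmem hw
      rw [mem_bigAnd] at h
      exact ⟨h CA.neg (by simp), h CB.neg (by simp), h CE.neg (by simp),
        h (DLConcept.ex X1 CE) (by simp), h (DLConcept.ex Y2 CA) (by simp),
        h (DLConcept.atmost 3 S12 DLConcept.top) (by simp)⟩
    have hE : ∀ w ∈ I.cSem CE, w ∉ I.cSem CA ∧ w ∉ I.cSem CB ∧ w ∉ I.cSem CC ∧
        (∃ u, I.rSem X2 w u ∧ u ∈ I.cSem CC) ∧ (∃ v, I.rSem Y2 w v ∧ v ∈ I.cSem CB) ∧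
        Cardinal.mk {y // I.rSem S22 w y ∧ y ∈ I.cSem DLConcept.top} ≤ ((3:ℕ) : Cardinal) := by
      intro w hw
      have h := hT _ axEmem hw
      rw [mem_bigAnd] at h
      exact ⟨h CA.neg (by simp), h CB.neg (by simp), h CC.neg (by simp),
        h (DLConcept.ex X2 CC) (by simp), h (DLConcept.ex Y2 CB) (by simp),
        h (DLConcept.atmost 3 S22 DLConcept.top) (by simp)⟩
    -- tiling axiom
    have hTile : ∀ w : I.Dom, (w ∈ I.cSem CA ∨ w ∈ I.cSem CB ∨ w ∈ I.cSem CC ∨ w ∈ I.cSem CE) →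
        ∃ d ∈ Dset, w ∈ I.cSem (DLConcept.atom (cd d)) := by
      intro w hw
      have h := hT _ tilmem (show w ∈ I.cSem (bigOr [CA, CB, CC, CE]) from
        (mem_bigOr _ _).2 (by
          rcases hw with h | h | h | h
          · exact ⟨CA, by simp, h⟩
          · exact ⟨CB, by simp, h⟩
          · exact ⟨CC, by simp, h⟩
          · exact ⟨CE, by simp, h⟩))
      rw [mem_bigOr] at h
      obtain ⟨Cc, hCc, hwc⟩ := h
      obtain ⟨d, hd, rfl⟩ := List.mem_map.1 hCc
      exact ⟨d, Finset.mem_toList.1 hd, hwc⟩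
    -- disjointness axioms
    have hDisj : ∀ d ∈ Dset, ∀ d' ∈ Dset, d' ≠ d → ∀ w : I.Dom,
        w ∈ I.cSem (DLConcept.atom (cd d)) → w ∉ I.cSem (DLConcept.atom (cd d')) := by
      intro d hd d' hd' hne w hw
      have hmem : (DLConcept.atom (cd d), DLConcept.neg (DLConcept.atom (cd d'))) ∈ T :=
        List.mem_append_left _ (List.mem_append_right _ (List.mem_flatMap.2
          ⟨d, Finset.mem_toList.2 hd, List.mem_map.2
            ⟨d', List.mem_filter.2 ⟨Finset.mem_toList.2 hd', by simp [hne]⟩, rfl⟩⟩))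
      exact hT _ hmem hw
    -- compatibility axioms
    have hCompat : ∀ d ∈ Dset, ∀ w : I.Dom, w ∈ I.cSem (DLConcept.atom (cd d)) →
        (∀ q, (I.rSem X1 w q ∨ I.rSem X2 w q) →
          ∃ d', (d, d') ∈ H ∧ q ∈ I.cSem (DLConcept.atom (cd d'))) ∧
        (∀ q, (I.rSem Y1 w q ∨ I.rSem Y2 w q) →
          ∃ d', (d, d') ∈ V ∧ q ∈ I.cSem (DLConcept.atom (cd d'))) := by
      intro d hd w hw
      have hmem : (DLConcept.atom (cd d), bigAnd
          [DLConcept.all X1 (bigOr ((H.toList.filter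
              (fun p => p.1 = d)).map (fun p => DLConcept.atom (cd p.2)))),
           DLConcept.all X2 (bigOr ((H.toList.filter
              (fun p => p.1 = d)).map (fun p => DLConcept.atom (cd p.2)))),
           DLConcept.all Y1 (bigOr ((V.toList.filter
              (fun p => p.1 = d)).map (fun p => DLConcept.atom (cd p.2)))),
           DLConcept.all Y2 (bigOr ((V.toList.filter
              (fun p => p.1 = d)).map (fun p => DLConcept.atom (cd p.2))))]) ∈ T :=
        List.mem_append_right _ (List.mem_map.2 ⟨d, Finset.mem_toList.2 hd, rfl⟩)
      have h := hT _ hmem hw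
      rw [mem_bigAnd] at h
      constructor
      · rintro q (hq | hq)
        · have h1 := h _ (show DLConcept.all X1 (bigOr ((H.toList.filter
              (fun p => p.1 = d)).map (fun p => DLConcept.atom (cd p.2)))) ∈ _ from
              List.Mem.head _) q hq
          rw [mem_bigOr] at h1
          obtain ⟨Cc, hCc, hqc⟩ := h1
          obtain ⟨pr, hpr, rfl⟩ := List.mem_map.1 hCc
          obtain ⟨hprH, hpr1⟩ := List.mem_filter.1 hpr
          have hpr1' : pr.1 = d := by simpa using hpr1
          exact ⟨pr.2, by rw [← hpr1']; exact Finset.mem_toList.1 hprH, hqc⟩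
        · have h1 := h _ (show DLConcept.all X2 (bigOr ((H.toList.filter
              (fun p => p.1 = d)).map (fun p => DLConcept.atom (cd p.2)))) ∈ _ from
              List.Mem.tail _ (List.Mem.head _)) q hq
          rw [mem_bigOr] at h1
          obtain ⟨Cc, hCc, hqc⟩ := h1
          obtain ⟨pr, hpr, rfl⟩ := List.mem_map.1 hCc
          obtain ⟨hprH, hpr1⟩ := List.mem_filter.1 hpr
          have hpr1' : pr.1 = d := by simpa using hpr1
          exact ⟨pr.2, by rw [← hpr1']; exact Finset.mem_toList.1 hprH, hqc⟩
      · rintro q (hq | hq)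
        · have h1 := h _ (show DLConcept.all Y1 (bigOr ((V.toList.filter
              (fun p => p.1 = d)).map (fun p => DLConcept.atom (cd p.2)))) ∈ _ from
              List.Mem.tail _ (List.Mem.tail _ (List.Mem.head _))) q hq
          rw [mem_bigOr] at h1
          obtain ⟨Cc, hCc, hqc⟩ := h1
          obtain ⟨pr, hpr, rfl⟩ := List.mem_map.1 hCc
          obtain ⟨hprV, hpr1⟩ := List.mem_filter.1 hpr
          have hpr1' : pr.1 = d := by simpa using hpr1
          exact ⟨pr.2, by rw [← hpr1']; exact Finset.mem_toList.1 hprV, hqc⟩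
        · have h1 := h _ (show DLConcept.all Y2 (bigOr ((V.toList.filter
              (fun p => p.1 = d)).map (fun p => DLConcept.atom (cd p.2)))) ∈ _ from
              List.Mem.tail _ (List.Mem.tail _ (List.Mem.tail _ (List.Mem.head _)))) q hq
          rw [mem_bigOr] at h1
          obtain ⟨Cc, hCc, hqc⟩ := h1
          obtain ⟨pr, hpr, rfl⟩ := List.mem_map.1 hCc
          obtain ⟨hprV, hpr1⟩ := List.mem_filter.1 hpr
          have hpr1' : pr.1 = d := by simpa using hpr1
          exact ⟨pr.2, by rw [← hpr1']; exact Finset.mem_toList.1 hprV, hqc⟩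
    -- role hierarchy facts
    have subX1S11 : ∀ x y, I.rSem X1 x y → I.rSem S11 x y :=
      hRH X1 S11 (Relation.ReflTransGen.single (Or.inl (List.Mem.head _)))
    have subY1S11 : ∀ x y, I.rSem Y1 x y → I.rSem S11 x y :=
      hRH Y1 S11 (Relation.ReflTransGen.single (Or.inl (List.Mem.tail _ (List.Mem.head _))))
    have subX1S12 : ∀ x y, I.rSem X1 x y → I.rSem S12 x y :=
      hRH X1 S12 (Relation.ReflTransGen.single (Or.inl
        (List.Mem.tail _ (List.Mem.tail _ (List.Mem.head _)))))
    have subY2S12 : ∀ x y, I.rSem Y2 x y → I.rSem S12 x y :=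
      hRH Y2 S12 (Relation.ReflTransGen.single (Or.inl
        (List.Mem.tail _ (List.Mem.tail _ (List.Mem.tail _ (List.Mem.head _))))))
    have subX2S21 : ∀ x y, I.rSem X2 x y → I.rSem S21 x y :=
      hRH X2 S21 (Relation.ReflTransGen.single (Or.inl
        (List.Mem.tail _ (List.Mem.tail _ (List.Mem.tail _ (List.Mem.tail _
          (List.Mem.head _)))))))
    have subY1S21 : ∀ x y, I.rSem Y1 x y → I.rSem S21 x y :=
      hRH Y1 S21 (Relation.ReflTransGen.single (Or.inl
        (List.Mem.tail _ (List.Mem.tail _ (List.Mem.tail _ (List.Mem.tail _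
          (List.Mem.tail _ (List.Mem.head _))))))))
    have subX2S22 : ∀ x y, I.rSem X2 x y → I.rSem S22 x y :=
      hRH X2 S22 (Relation.ReflTransGen.single (Or.inl
        (List.Mem.tail _ (List.Mem.tail _ (List.Mem.tail _ (List.Mem.tail _
          (List.Mem.tail _ (List.Mem.tail _ (List.Mem.head _)))))))))
    have subY2S22 : ∀ x y, I.rSem Y2 x y → I.rSem S22 x y :=
      hRH Y2 S22 (Relation.ReflTransGen.single (Or.inl
        (List.Mem.tail _ (List.Mem.tail _ (List.Mem.tail _ (List.Mem.tail _
          (List.Mem.tail _ (List.Mem.tail _ (List.Mem.tail _ (List.Mem.head _))))))))))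
    have transS11 : Transitive (I.rSem S11) := hGood s11 hs11
    have transS12 : Transitive (I.rSem S12) := hGood s12 hs12
    have transS21 : Transitive (I.rSem S21) := hGood s21 hs21
    have transS22 : Transitive (I.rSem S22) := hGood s22 hs22
    -- choice of horizontal successors
    obtain ⟨fX, fXA, fXB, fXC, fXE⟩ : ∃ fX : I.Dom → I.Dom,
        (∀ w ∈ I.cSem CA, I.rSem X1 w (fX w) ∧ fX w ∈ I.cSem CB) ∧
        (∀ w ∈ I.cSem CB, I.rSem X2 w (fX w) ∧ fX w ∈ I.cSem CA) ∧
        (∀ w ∈ I.cSem CC, I.rSem X1 w (fX w) ∧ fX w ∈ I.cSem CE) ∧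
        (∀ w ∈ I.cSem CE, I.rSem X2 w (fX w) ∧ fX w ∈ I.cSem CC) := by
      refine ⟨fun w =>
        if ha : w ∈ I.cSem CA then Classical.choose (hA w ha).2.2.2.1
        else if hb : w ∈ I.cSem CB then Classical.choose (hB w hb).2.2.2.1
        else if hc : w ∈ I.cSem CC then Classical.choose (hC w hc).2.2.2.1
        else if he : w ∈ I.cSem CE then Classical.choose (hE w he).2.2.2.1
        else w, ?_, ?_, ?_, ?_⟩
      · intro w ha
        simp only [dif_pos ha]
        exact Classical.choose_spec (hA w ha).2.2.2.1
      · intro w hb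
        simp only [dif_neg (hB w hb).1, dif_pos hb]
        exact Classical.choose_spec (hB w hb).2.2.2.1
      · intro w hc
        simp only [dif_neg (hC w hc).1, dif_neg (hC w hc).2.1, dif_pos hc]
        exact Classical.choose_spec (hC w hc).2.2.2.1
      · intro w he
        simp only [dif_neg (hE w he).1, dif_neg (hE w he).2.1, dif_neg (hE w he).2.2.1,
          dif_pos he]
        exact Classical.choose_spec (hE w he).2.2.2.1
    -- choice of vertical successors
    obtain ⟨fY, fYA, fYB, fYC, fYE⟩ : ∃ fY : I.Dom → I.Dom,
        (∀ w ∈ I.cSem CA, I.rSem Y1 w (fY w) ∧ fY w ∈ I.cSem CC) ∧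
        (∀ w ∈ I.cSem CB, I.rSem Y1 w (fY w) ∧ fY w ∈ I.cSem CE) ∧
        (∀ w ∈ I.cSem CC, I.rSem Y2 w (fY w) ∧ fY w ∈ I.cSem CA) ∧
        (∀ w ∈ I.cSem CE, I.rSem Y2 w (fY w) ∧ fY w ∈ I.cSem CB) := by
      refine ⟨fun w =>
        if ha : w ∈ I.cSem CA then Classical.choose (hA w ha).2.2.2.2.1
        else if hb : w ∈ I.cSem CB then Classical.choose (hB w hb).2.2.2.2.1
        else if hc : w ∈ I.cSem CC then Classical.choose (hC w hc).2.2.2.2.1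
        else if he : w ∈ I.cSem CE then Classical.choose (hE w he).2.2.2.2.1
        else w, ?_, ?_, ?_, ?_⟩
      · intro w ha
        simp only [dif_pos ha]
        exact Classical.choose_spec (hA w ha).2.2.2.2.1
      · intro w hb
        simp only [dif_neg (hB w hb).1, dif_pos hb]
        exact Classical.choose_spec (hB w hb).2.2.2.2.1
      · intro w hc
        simp only [dif_neg (hC w hc).1, dif_neg (hC w hc).2.1, dif_pos hc]
        exact Classical.choose_spec (hC w hc).2.2.2.2.1
      · intro w he
        simp only [dif_neg (hE w he).1, dif_neg (hE w he).2.1, dif_neg (hE w he).2.2.1,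
          dif_pos he]
        exact Classical.choose_spec (hE w he).2.2.2.2.1
    -- the grid
    set g : ℕ → ℕ → I.Dom := fun m n => fX^[m] (fY^[n] x0) with hgdef
    have hg00 : g 0 0 = x0 := rfl
    have hgX : ∀ m n, g (m + 1) n = fX (g m n) := by
      intro m n
      rw [hgdef]
      exact Function.iterate_succ_apply' fX m _
    have hgY0 : ∀ n, g 0 (n + 1) = fY (g 0 n) := by
      intro n
      rw [hgdef]
      simp only [Function.iterate_zero, id_eq]
      exact Function.iterate_succ_apply' fY n _
    have hQ0 : ∀ n, (Even n → g 0 n ∈ I.cSem CA) ∧ (¬Even n → g 0 n ∈ I.cSem CC) := by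
      intro n
      induction n with
      | zero => exact ⟨fun _ => hg00 ▸ hx0, fun h => absurd Even.zero h⟩
      | succ n ih =>
        by_cases hn : Even n
        · refine ⟨fun h => absurd hn (by simpa [Nat.even_add_one] using h), fun _ => ?_⟩
          rw [hgY0]
          exact (fYA _ (ih.1 hn)).2
        · refine ⟨fun _ => ?_, fun h => absurd (by simpa [Nat.even_add_one] using hn) h⟩
          rw [hgY0]
          exact (fYC _ (ih.2 hn)).2
    have hQ : ∀ m n, (Even m → Even n → g m n ∈ I.cSem CA) ∧
        (Even m → ¬Even n → g m n ∈ I.cSem CC) ∧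
        (¬Even m → Even n → g m n ∈ I.cSem CB) ∧
        (¬Even m → ¬Even n → g m n ∈ I.cSem CE) := by
      intro m
      induction m with
      | zero =>
        intro n
        exact ⟨fun _ h => (hQ0 n).1 h, fun _ h => (hQ0 n).2 h,
          fun h => absurd Even.zero h, fun h => absurd Even.zero h⟩
      | succ m ih =>
        intro n
        by_cases hm : Even m <;> by_cases hn : Even n
        · refine ⟨fun h _ => absurd hm (by simpa [Nat.even_add_one] using h),
            fun h _ => absurd hm (by simpa [Nat.even_add_one] using h),
            fun _ _ => ?_, fun _ h => absurd hn h⟩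
          rw [hgX]
          exact (fXA _ ((ih n).1 hm hn)).2
        · refine ⟨fun h _ => absurd hm (by simpa [Nat.even_add_one] using h),
            fun h _ => absurd hm (by simpa [Nat.even_add_one] using h),
            fun _ h => absurd h hn, fun _ _ => ?_⟩
          rw [hgX]
          exact (fXC _ ((ih n).2.1 hm hn)).2
        · refine ⟨fun _ _ => ?_, fun _ h => absurd hn h,
            fun h _ => absurd (by simpa [Nat.even_add_one] using hm) h,
            fun h _ => absurd (by simpa [Nat.even_add_one] using hm) h⟩
          rw [hgX]
          exact (fXB _ ((ih n).2.2.1 hm hn)).2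
        · refine ⟨fun _ h => absurd h hn, fun _ _ => ?_,
            fun h _ => absurd (by simpa [Nat.even_add_one] using hm) h,
            fun h _ => absurd (by simpa [Nat.even_add_one] using hm) h⟩
          rw [hgX]
          exact (fXE _ ((ih n).2.2.2 hm hn)).2
    have hEdgeX : ∀ m n, I.rSem X1 (g m n) (g (m + 1) n) ∨ I.rSem X2 (g m n) (g (m + 1) n) := by
      intro m n
      by_cases hm : Even m <;> by_cases hn : Even n
      · left; rw [hgX]; exact (fXA _ ((hQ m n).1 hm hn)).1
      · left; rw [hgX]; exact (fXC _ ((hQ m n).2.1 hm hn)).1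
      · right; rw [hgX]; exact (fXB _ ((hQ m n).2.2.1 hm hn)).1
      · right; rw [hgX]; exact (fXE _ ((hQ m n).2.2.2 hm hn)).1
    have hEdgeY : ∀ m n, (Even n → I.rSem Y1 (g m n) (g m (n + 1))) ∧
        (¬Even n → I.rSem Y2 (g m n) (g m (n + 1))) := by
      intro m
      induction m with
      | zero =>
        intro n
        constructor
        · intro hn; rw [hgY0]; exact (fYA _ ((hQ 0 n).1 Even.zero hn)).1
        · intro hn; rw [hgY0]; exact (fYC _ ((hQ 0 n).2.1 Even.zero hn)).1
      | succ m ih =>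
        intro n
        have hm1 : ∀ (hm : Even m), ¬Even (m + 1) := fun hm => by simp [Nat.even_add_one, hm]
        have hm2 : ∀ (hm : ¬Even m), Even (m + 1) := fun hm => by simp [Nat.even_add_one, hm]
        have hn1 : ∀ (hn : Even n), ¬Even (n + 1) := fun hn => by simp [Nat.even_add_one, hn]
        have hn2 : ∀ (hn : ¬Even n), Even (n + 1) := fun hn => by simp [Nat.even_add_one, hn]
        by_cases hm : Even m <;> by_cases hn : Even n
        · -- w ∈ A, u ∈ B, v ∈ C, corner ∈ E, restriction on S11
          refine ⟨fun _ => ?_, fun h => absurd hn h⟩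
          have hw : g m n ∈ I.cSem CA := (hQ m n).1 hm hn
          have hu : g (m + 1) n ∈ I.cSem CB := (hQ (m + 1) n).2.2.1 (hm1 hm) hn
          have hv : g m (n + 1) ∈ I.cSem CC := (hQ m (n + 1)).2.1 hm (hn1 hn)
          have e1 : I.rSem X1 (g m n) (g (m + 1) n) := by rw [hgX]; exact (fXA _ hw).1
          have e2 : I.rSem Y1 (g m n) (g m (n + 1)) := (ih n).1 hn
          have e3 : I.rSem Y1 (g (m + 1) n) (fY (g (m + 1) n)) := (fYB _ hu).1
          have e4 : I.rSem X1 (g m (n + 1)) (fX (g m (n + 1))) := (fXC _ hv).1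
          have hsq := square_lemma transS11 subX1S11 subY1S11 ((hA _ hw).2.2.2.2.2)
            hu hv (fYB _ hu).2 (fXC _ hv).2
            (fun x hx => (hB x hx).2.1) (fun x hx => (hB x hx).2.2.1)
            (fun x hx => (hC x hx).2.2.1) e1 e2 e3 e4
          rw [hgX m (n + 1), ← hsq]
          exact e3
        · -- w ∈ C, u ∈ E, v ∈ A, corner ∈ B, restriction on S12
          refine ⟨fun h => absurd h hn, fun _ => ?_⟩
          have hw : g m n ∈ I.cSem CC := (hQ m n).2.1 hm hn
          have hu : g (m + 1) n ∈ I.cSem CE := (hQ (m + 1) n).2.2.2 (hm1 hm) hn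
          have hv : g m (n + 1) ∈ I.cSem CA := (hQ m (n + 1)).1 hm (hn2 hn)
          have e1 : I.rSem X1 (g m n) (g (m + 1) n) := by rw [hgX]; exact (fXC _ hw).1
          have e2 : I.rSem Y2 (g m n) (g m (n + 1)) := (ih n).2 hn
          have e3 : I.rSem Y2 (g (m + 1) n) (fY (g (m + 1) n)) := (fYE _ hu).1
          have e4 : I.rSem X1 (g m (n + 1)) (fX (g m (n + 1))) := (fXA _ hv).1
          have hsq := square_lemma transS12 subX1S12 subY2S12 ((hC _ hw).2.2.2.2.2)
            hu hv (fYE _ hu).2 (fXA _ hv).2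
            (fun x hx => (hE x hx).1) (fun x hx => (hE x hx).2.1)
            (fun x hx => (hA x hx).1) e1 e2 e3 e4
          rw [hgX m (n + 1), ← hsq]
          exact e3
        · -- w ∈ B, u ∈ A, v ∈ E, corner ∈ C, restriction on S21
          refine ⟨fun _ => ?_, fun h => absurd hn h⟩
          have hw : g m n ∈ I.cSem CB := (hQ m n).2.2.1 hm hn
          have hu : g (m + 1) n ∈ I.cSem CA := (hQ (m + 1) n).1 (hm2 hm) hn
          have hv : g m (n + 1) ∈ I.cSem CE := (hQ m (n + 1)).2.2.2 hm (hn1 hn)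
          have e1 : I.rSem X2 (g m n) (g (m + 1) n) := by rw [hgX]; exact (fXB _ hw).1
          have e2 : I.rSem Y1 (g m n) (g m (n + 1)) := (ih n).1 hn
          have e3 : I.rSem Y1 (g (m + 1) n) (fY (g (m + 1) n)) := (fYA _ hu).1
          have e4 : I.rSem X2 (g m (n + 1)) (fX (g m (n + 1))) := (fXE _ hv).1
          have hsq := square_lemma transS21 subX2S21 subY1S21 ((hB _ hw).2.2.2.2.2)
            hu hv (fYA _ hu).2 (fXE _ hv).2
            (fun x hx => (hA x hx).2.2.1) (fun x hx => (hA x hx).2.1)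
            (fun x hx => (hE x hx).2.2.1) e1 e2 e3 e4
          rw [hgX m (n + 1), ← hsq]
          exact e3
        · -- w ∈ E, u ∈ C, v ∈ B, corner ∈ A, restriction on S22
          refine ⟨fun h => absurd h hn, fun _ => ?_⟩
          have hw : g m n ∈ I.cSem CE := (hQ m n).2.2.2 hm hn
          have hu : g (m + 1) n ∈ I.cSem CC := (hQ (m + 1) n).2.1 (hm2 hm) hn
          have hv : g m (n + 1) ∈ I.cSem CB := (hQ m (n + 1)).2.2.1 hm (hn2 hn)
          have e1 : I.rSem X2 (g m n) (g (m + 1) n) := by rw [hgX]; exact (fXE _ hw).1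
          have e2 : I.rSem Y2 (g m n) (g m (n + 1)) := (ih n).2 hn
          have e3 : I.rSem Y2 (g (m + 1) n) (fY (g (m + 1) n)) := (fYC _ hu).1
          have e4 : I.rSem X2 (g m (n + 1)) (fX (g m (n + 1))) := (fXB _ hv).1
          have hsq := square_lemma transS22 subX2S22 subY2S22 ((hE _ hw).2.2.2.2.2)
            hu hv (fYC _ hu).2 (fXB _ hv).2
            (fun x hx => (hC x hx).2.1) (fun x hx => (hC x hx).1)
            (fun x hx => (hB x hx).1) e1 e2 e3 e4
          rw [hgX m (n + 1), ← hsq]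
          exact e3
    -- tiles
    have hgtype : ∀ m n, g m n ∈ I.cSem CA ∨ g m n ∈ I.cSem CB ∨ g m n ∈ I.cSem CC ∨
        g m n ∈ I.cSem CE := by
      intro m n
      by_cases hm : Even m <;> by_cases hn : Even n
      · exact Or.inl ((hQ m n).1 hm hn)
      · exact Or.inr (Or.inr (Or.inl ((hQ m n).2.1 hm hn)))
      · exact Or.inr (Or.inl ((hQ m n).2.2.1 hm hn))
      · exact Or.inr (Or.inr (Or.inr ((hQ m n).2.2.2 hm hn)))
    have hex : ∀ m n, ∃ d ∈ Dset, g m n ∈ I.cSem (DLConcept.atom (cd d)) :=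
      fun m n => hTile _ (hgtype m n)
    refine ⟨fun m n => Classical.choose (hex m n), ?_, ?_, ?_⟩
    · exact fun m n => (Classical.choose_spec (hex m n)).1
    · intro m n
      obtain ⟨d', hd'H, hmem⟩ :=
        (hCompat _ (Classical.choose_spec (hex m n)).1 _
          (Classical.choose_spec (hex m n)).2).1 _ (hEdgeX m n)
      have hud : d' = Classical.choose (hex (m + 1) n) := by
        by_contra hne
        exact hDisj _ (Classical.choose_spec (hex (m + 1) n)).1 d' (hH _ hd'H).2 hne _
          (Classical.choose_spec (hex (m + 1) n)).2 hmem
      show (Classical.choose (hex m n), Classical.choose (hex (m + 1) n)) ∈ H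
      rw [← hud]
      exact hd'H
    · intro m n
      have hedge : I.rSem Y1 (g m n) (g m (n + 1)) ∨ I.rSem Y2 (g m n) (g m (n + 1)) := by
        by_cases hn : Even n
        · exact Or.inl ((hEdgeY m n).1 hn)
        · exact Or.inr ((hEdgeY m n).2 hn)
      obtain ⟨d', hd'V, hmem⟩ :=
        (hCompat _ (Classical.choose_spec (hex m n)).1 _
          (Classical.choose_spec (hex m n)).2).2 _ hedge
      have hud : d' = Classical.choose (hex m (n + 1)) := by
        by_contra hne
        exact hDisj _ (Classical.choose_spec (hex m (n + 1))).1 d' (hV _ hd'V).2 hne _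
          (Classical.choose_spec (hex m (n + 1))).2 hmem
      show (Classical.choose (hex m n), Classical.choose (hex m (n + 1))) ∈ V
      rw [← hud]
      exact hd'V
  · rintro ⟨t, htD, htH, htV⟩
    exact ⟨tileInterp x1 x2 y1 y2 s11 s12 s21 s22 a b c e cd t,
      tileGood Rp hroles hx1 hx2 hy1 hy2,
      tileRH hroles,
      tileModelsT Dset H V hroles hc hcd hfresh hH hV htD htH htV,
      ⟨(0, 0), Or.inl ⟨rfl, Even.zero, Even.zero⟩⟩⟩
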